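/- arXiv:1011.2196 — 4 statements merged into one kernel-verified Lean document; each statement's English description precedes it below -/
import Mathlib

section
/- With Q = [V_{N₁}(1, ω_{N₁}, …, ω_{N₁}^{M₁−1})]ᵀ where ω_{N₁} = exp(−2πi/N₁), and H(t) = V_{N₁}(ω^{t−1}, ω^{N₁+t−1}, …, ω^{(M₁−1)N₁+t−1}) for t = 1, …, N₁ where ω = exp(−2πi/N₁²), the matrix à = (Q ⊗ I_{N₁}) · diag(H(1),…,H(N₁)) equals, up to a permutation of columns, the M₁N₁×M₁N₁ Vandermonde matrix on the distinct nodes {ω^{mN₁+t} : 0 ≤ m ≤ M₁−1, 0 ≤ t ≤ N₁−1}; in particular à is invertible. -/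
open Matrix Kronecker

/-- `vand n m a` is the `n × m` Vandermonde matrix whose `j`-th column is
`(1, a j, (a j)^2, …, (a j)^(n-1))ᵀ`. -/
noncomputable def vand (n m : ℕ) (a : Fin m → ℂ) : Matrix (Fin n) (Fin m) ℂ :=
  Matrix.of fun i j => a j ^ (i : ℕ)

/-- Block diagonal matrix `diag (H 1, …, H L)`. -/
noncomputable def bdiag {L n m : ℕ} (H : Fin L → Matrix (Fin n) (Fin m) ℂ) :
    Matrix (Fin L × Fin n) (Fin m × Fin L) ℂ :=
  Matrix.of fun p q => if p.1 = q.2 then H p.1 p.2 q.1 else 0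

theorem stmt_4 (M₁ N₁ : ℕ) (h1 : 1 ≤ M₁) (h2 : M₁ ≤ N₁) :
    let ω : ℂ := Complex.exp (-2 * Real.pi * Complex.I / (N₁ ^ 2 : ℕ))
    let ωN : ℂ := Complex.exp (-2 * Real.pi * Complex.I / N₁)
    let Q : Matrix (Fin M₁) (Fin N₁) ℂ := (vand N₁ M₁ fun j => ωN ^ (j : ℕ))ᵀ
    let H : Fin N₁ → Matrix (Fin N₁) (Fin M₁) ℂ :=
      fun t => vand N₁ M₁ fun m => ω ^ ((m : ℕ) * N₁ + (t : ℕ))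
    let A := (Q ⊗ₖ (1 : Matrix (Fin N₁) (Fin N₁) ℂ)) * bdiag H
    (∃ (e : (Fin M₁ × Fin N₁) ≃ Fin (M₁ * N₁)) (f : (Fin M₁ × Fin N₁) ≃ Fin (M₁ * N₁)),
      ∀ p q, A p q = (ω ^ (((f q : ℕ) / N₁) * N₁ + (f q : ℕ) % N₁)) ^ (e p : ℕ)) ∧
    IsUnit A := by
  intro ω ωN Q H A
  have hN : N₁ ≠ 0 := by omega
  have hNC : (N₁ : ℂ) ≠ 0 := Nat.cast_ne_zero.mpr hN
  have hN2 : (N₁ ^ 2 : ℕ) ≠ 0 := by positivity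
  -- ω is a primitive N₁²-th root of unity
  have hprim : IsPrimitiveRoot ω (N₁ ^ 2) := by
    have h := (Complex.isPrimitiveRoot_exp (N₁ ^ 2) hN2).inv
    have heq : ω = (Complex.exp (2 * Real.pi * Complex.I / ((N₁ ^ 2 : ℕ) : ℂ)))⁻¹ := by
      rw [← Complex.exp_neg]
      show Complex.exp (-2 * Real.pi * Complex.I / ((N₁ ^ 2 : ℕ) : ℂ)) = _
      congr 1
      ring
    rwa [heq]
  have hω1 : ω ^ (N₁ ^ 2) = 1 := hprim.pow_eq_one
  -- ωN = ω ^ N₁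
  have hωN : ωN = ω ^ N₁ := by
    show Complex.exp _ = Complex.exp _ ^ N₁
    rw [← Complex.exp_nat_mul]
    congr 1
    push_cast
    field_simp
  -- entry formula
  have hA : ∀ (p q : Fin M₁ × Fin N₁),
      A p q = ω ^ (((q.1 : ℕ) * N₁ + (q.2 : ℕ)) * ((p.1 : ℕ) * N₁ + (p.2 : ℕ))) := by
    intro p q
    have key : ∀ a k : ℕ, ω ^ (a + N₁ ^ 2 * k) = ω ^ a := by
      intro a k; rw [pow_add, pow_mul, hω1, one_pow, mul_one]
    have h0 : A p q = Q p.1 q.2 * H q.2 p.2 q.1 := by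
      show ((Q ⊗ₖ (1 : Matrix (Fin N₁) (Fin N₁) ℂ)) * bdiag H) p q = _
      rw [Matrix.mul_apply]
      rw [Fintype.sum_prod_type]
      simp only [Matrix.kroneckerMap_apply, bdiag, Matrix.one_apply, Matrix.of_apply,
        mul_ite, ite_mul, mul_one, mul_zero, zero_mul, one_mul]
      rw [Finset.sum_comm]
      simp [Finset.sum_ite_eq, Finset.sum_ite_eq']
    have hQ : Q p.1 q.2 = ω ^ (N₁ * (p.1 : ℕ) * (q.2 : ℕ)) := by
      show (vand N₁ M₁ fun j => ωN ^ (j : ℕ)) q.2 p.1 = _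
      simp only [vand, Matrix.of_apply]
      rw [hωN, ← pow_mul ω N₁ (p.1 : ℕ), ← pow_mul ω (N₁ * (p.1 : ℕ)) (q.2 : ℕ)]
    have hH : H q.2 p.2 q.1 = ω ^ (((q.1 : ℕ) * N₁ + (q.2 : ℕ)) * (p.2 : ℕ)) := by
      show (vand N₁ M₁ fun m => ω ^ ((m : ℕ) * N₁ + (q.2 : ℕ))) p.2 q.1 = _
      simp only [vand, Matrix.of_apply]
      rw [← pow_mul]
    rw [h0, hQ, hH, ← pow_add,
      show ((q.1 : ℕ) * N₁ + (q.2 : ℕ)) * ((p.1 : ℕ) * N₁ + (p.2 : ℕ))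
        = (N₁ * (p.1 : ℕ) * (q.2 : ℕ) + ((q.1 : ℕ) * N₁ + (q.2 : ℕ)) * (p.2 : ℕ))
          + N₁ ^ 2 * ((q.1 : ℕ) * (p.1 : ℕ)) from by ring, key]
  -- the node function
  set v : Fin (M₁ * N₁) → ℂ := fun k => ω ^ (k : ℕ) with hv
  have hval : ∀ p : Fin M₁ × Fin N₁,
      ((finProdFinEquiv p : Fin (M₁ * N₁)) : ℕ) = (p.1 : ℕ) * N₁ + (p.2 : ℕ) := by
    intro p
    simp [finProdFinEquiv]
    ring
  constructor
  · refine ⟨finProdFinEquiv, finProdFinEquiv, fun p q => ?_⟩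
    rw [Nat.div_add_mod', hA p q, hval, hval, ← pow_mul]
  · have hinj : Function.Injective v := by
      intro a b hab
      have ha : (a : ℕ) < N₁ ^ 2 := lt_of_lt_of_le a.2 (by nlinarith)
      have hb : (b : ℕ) < N₁ ^ 2 := lt_of_lt_of_le b.2 (by nlinarith)
      exact Fin.ext (hprim.pow_inj ha hb hab)
    have hAeq : A = ((Matrix.vandermonde v)ᵀ).submatrix finProdFinEquiv finProdFinEquiv := by
      ext p q
      rw [Matrix.submatrix_apply, Matrix.transpose_apply, Matrix.vandermonde, hA p q]
      simp only [Matrix.of_apply, hv]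
      rw [← pow_mul, hval, hval]
    rw [hAeq, Matrix.isUnit_iff_isUnit_det, Matrix.det_submatrix_equiv_self,
      Matrix.det_transpose]
    exact (Matrix.det_vandermonde_ne_zero_iff.mpr hinj).isUnit
end

section
/- Cyclic antenna-mode switching full-rank lemma: let N₁ ≥ M₁ ≥ 1, let h₁,…,h_{N₁} ∈ ℂ^{N₁} and Ĥ = [h₁ ⋯ h_{N₁}]. Define H(t) = [h_t, h_{t+1}, …, h_{t+M₁−1}] (indices mod N₁) for t = 1,…,N₁, let ω = exp(−2πi/N₁), Q = [V_{N₁}(1,ω,…,ω^{M₁−1})]ᵀ, and à = (Q ⊗ I_{N₁})·diag(H(1),…,H(N₁)). If Ĥ is invertible, then à is invertible. -/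
open Matrix Kronecker

/-- Block-diagonal matrix whose `a`-th block is `Hhat * diag (ω^{s·a})`. -/
noncomputable def Rmat (M₁ N₁ : ℕ) (ω : ℂ) (Hhat : Matrix (Fin N₁) (Fin N₁) ℂ) :
    Matrix (Fin M₁ × Fin N₁) (Fin M₁ × Fin N₁) ℂ :=
  Matrix.of fun p q => if p.1 = q.1 then ω ^ ((q.2 : ℕ) * (p.1 : ℕ)) * Hhat p.2 q.2 else 0

/-- Column-shifting matrix mixed with a Vandermonde factor. -/
noncomputable def Smat (M₁ N₁ : ℕ) (h2 : M₁ ≤ N₁) (c : Matrix (Fin M₁) (Fin M₁) ℂ) :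
    Matrix (Fin M₁ × Fin N₁) (Fin M₁ × Fin N₁) ℂ :=
  Matrix.of fun p q => if p.2 = q.2 + Fin.castLE h2 q.1 then c p.1 q.1 else 0

lemma Rmat_isUnit (M₁ N₁ : ℕ) (ω : ℂ) (hω : ω ≠ 0)
    (Hhat : Matrix (Fin N₁) (Fin N₁) ℂ) (hH : IsUnit Hhat) :
    IsUnit (Rmat M₁ N₁ ω Hhat) := by
  have hdet : IsUnit Hhat.det := (Matrix.isUnit_iff_isUnit_det _).mp hH
  have hinv : Hhat * Hhat⁻¹ = 1 := Matrix.mul_nonsing_inv _ hdet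
  rw [Matrix.isUnit_iff_isUnit_det]
  refine Matrix.isUnit_det_of_right_inverse (B := Matrix.of fun p q =>
    if p.1 = q.1 then (ω ^ ((p.2 : ℕ) * (p.1 : ℕ)))⁻¹ * Hhat⁻¹ p.2 q.2 else 0) ?_
  ext ⟨a, i⟩ ⟨a', i'⟩
  simp only [Matrix.mul_apply, Rmat, Matrix.of_apply, Fintype.sum_prod_type,
    ite_mul, mul_ite, zero_mul, mul_zero, Matrix.one_apply, Prod.mk.injEq]
  rw [Finset.sum_eq_single a]
  · by_cases hA : a = a'
    · subst hA
      simp only [eq_self_iff_true, if_true, true_and]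
      have heq : ∀ s : Fin N₁, ω ^ ((s : ℕ) * (a : ℕ)) * Hhat i s *
          ((ω ^ ((s : ℕ) * (a : ℕ)))⁻¹ * Hhat⁻¹ s i') = Hhat i s * Hhat⁻¹ s i' := by
        intro s
        field_simp
      rw [Finset.sum_congr rfl fun s _ => heq s]
      have := congrFun (congrFun hinv i) i'
      simpa [Matrix.mul_apply, Matrix.one_apply] using this
    · simp [hA]
  · intro b _ hb
    simp [Ne.symm hb]
  · simp

lemma Smat_isUnit (M₁ N₁ : ℕ) (hN : N₁ ≠ 0) (h2 : M₁ ≤ N₁)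
    (c : Matrix (Fin M₁) (Fin M₁) ℂ)
    (hc : IsUnit c.det) : IsUnit (Smat M₁ N₁ h2 c) := by
  haveI : NeZero N₁ := ⟨hN⟩
  have hinv : c * c⁻¹ = 1 := Matrix.mul_nonsing_inv _ hc
  rw [Matrix.isUnit_iff_isUnit_det]
  refine Matrix.isUnit_det_of_right_inverse (B := Matrix.of fun p q =>
    if p.2 = q.2 - Fin.castLE h2 p.1 then c⁻¹ p.1 q.1 else 0) ?_
  ext ⟨b, s⟩ ⟨b', s'⟩
  simp only [Matrix.mul_apply, Smat, Matrix.of_apply, Fintype.sum_prod_type,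
    ite_mul, mul_ite, zero_mul, mul_zero, Matrix.one_apply, Prod.mk.injEq]
  have hsub : ∀ j : Fin M₁, s' - Fin.castLE h2 j + Fin.castLE h2 j = s' := fun j =>
    sub_add_cancel s' (Fin.castLE h2 j)
  have key : ∀ j : Fin M₁, (∑ t : Fin N₁,
      (if t = s' - Fin.castLE h2 j then
        (if s = t + Fin.castLE h2 j then c b j * c⁻¹ j b' else 0) else 0)) =
      if s = s' then c b j * c⁻¹ j b' else 0 := by
    intro j
    rw [Finset.sum_eq_single (s' - Fin.castLE h2 j)]
    · rw [if_pos rfl, hsub j]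
    · intro t _ ht; simp [ht]
    · simp
  rw [Finset.sum_congr rfl fun j _ => key j]
  by_cases hs : s = s'
  · subst hs
    have := congrFun (congrFun hinv b) b'
    simp only [Matrix.mul_apply, Matrix.one_apply] at this
    simp [this, Matrix.one_apply]
  · simp [hs]

theorem stmt_7 (M₁ N₁ : ℕ) (h1 : 1 ≤ M₁) (h2 : M₁ ≤ N₁)
    (h : Fin N₁ → Fin N₁ → ℂ) :
    let ω : ℂ := Complex.exp (-2 * Real.pi * Complex.I / N₁)
    -- `h j` is the column vector `h_j`; `Hhat = [h₁ ⋯ h_{N₁}]`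
    let Hhat : Matrix (Fin N₁) (Fin N₁) ℂ := Matrix.of fun i j => h j i
    let Q : Matrix (Fin M₁) (Fin N₁) ℂ := (vand N₁ M₁ fun j => ω ^ (j : ℕ))ᵀ
    -- cyclic antenna-mode switching: `H t = [h_t, h_{t+1}, …, h_{t+M₁-1}]` (indices mod N₁)
    let H : Fin N₁ → Matrix (Fin N₁) (Fin M₁) ℂ :=
      fun t => Matrix.of fun i j => h (t + Fin.castLE h2 j) i
    IsUnit Hhat → IsUnit ((Q ⊗ₖ (1 : Matrix (Fin N₁) (Fin N₁) ℂ)) * bdiag H) := by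
  intro ω Hhat Q H hU
  have hN : N₁ ≠ 0 := by omega
  -- ω⁻¹ is a primitive N₁-th root of unity
  have hωinv : ω⁻¹ = Complex.exp (2 * Real.pi * Complex.I / N₁) := by
    rw [← Complex.exp_neg]
    congr 1
    ring
  have hprim : IsPrimitiveRoot (ω⁻¹) N₁ := by
    rw [hωinv]; exact Complex.isPrimitiveRoot_exp N₁ hN
  have hω0 : ω ≠ 0 := Complex.exp_ne_zero _
  have hω1 : ω ^ N₁ = 1 := by
    have := hprim.pow_eq_one
    rw [inv_pow, inv_eq_one] at this
    exact this
  -- the Vandermonde factor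
  set v : Fin M₁ → ℂ := fun j => (ω⁻¹) ^ (j : ℕ) with hv
  have hvinj : Function.Injective v := by
    intro i j hij
    exact Fin.ext (hprim.pow_inj (lt_of_lt_of_le i.isLt h2) (lt_of_lt_of_le j.isLt h2) hij)
  set c : Matrix (Fin M₁) (Fin M₁) ℂ := (Matrix.vandermonde v)ᵀ with hcdef
  have hcdet : IsUnit c.det := by
    rw [hcdef, Matrix.det_transpose]
    exact (Matrix.det_vandermonde_ne_zero_iff.mpr hvinj).isUnit
  have key : (Q ⊗ₖ (1 : Matrix (Fin N₁) (Fin N₁) ℂ)) * bdiag H =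
      Rmat M₁ N₁ ω Hhat * Smat M₁ N₁ h2 c := by
    ext ⟨a, i⟩ ⟨j, t⟩
    -- LHS
    have hL : ((Q ⊗ₖ (1 : Matrix (Fin N₁) (Fin N₁) ℂ)) * bdiag H) (a, i) (j, t) =
        ω ^ ((a : ℕ) * (t : ℕ)) * h (t + Fin.castLE h2 j) i := by
      simp only [Matrix.mul_apply, Fintype.sum_prod_type, Matrix.kroneckerMap_apply,
        bdiag, Matrix.of_apply, Matrix.one_apply, ite_mul, mul_ite, zero_mul, mul_zero,
        one_mul]
      rw [Finset.sum_eq_single t]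
      · rw [Finset.sum_eq_single i]
        · simp [Q, vand, H, Matrix.transpose_apply, ← pow_mul]
        · intro k _ hk; simp [Ne.symm hk]
        · simp
      · intro s _ hs
        apply Finset.sum_eq_zero
        intro k _
        simp [hs]
      · simp
    -- RHS
    have hR : (Rmat M₁ N₁ ω Hhat * Smat M₁ N₁ h2 c) (a, i) (j, t) =
        ω ^ (((t + Fin.castLE h2 j : Fin N₁) : ℕ) * (a : ℕ)) * h (t + Fin.castLE h2 j) i
          * (ω⁻¹) ^ ((j : ℕ) * (a : ℕ)) := by
      simp only [Matrix.mul_apply, Fintype.sum_prod_type, Rmat, Smat, Matrix.of_apply,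
        ite_mul, mul_ite, zero_mul, mul_zero]
      rw [Finset.sum_eq_single a]
      · rw [Finset.sum_eq_single (t + Fin.castLE h2 j)]
        · simp [hcdef, Matrix.vandermonde, hv, Hhat, ← pow_mul]
        · intro s _ hs; simp [hs]
        · simp
      · intro b _ hb
        apply Finset.sum_eq_zero
        intro s _
        simp [Ne.symm hb]
      · simp
    rw [hL, hR]
    -- exponent arithmetic
    have hmod : ω ^ (((t + Fin.castLE h2 j : Fin N₁) : ℕ) * (a : ℕ)) =
        ω ^ (((t : ℕ) + (j : ℕ)) * (a : ℕ)) := by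
      rw [Fin.val_add, Fin.coe_castLE, pow_mul, pow_mul,
        ← pow_eq_pow_mod _ hω1]
    rw [hmod, add_mul, pow_add, inv_pow, mul_comm (a : ℕ) (t : ℕ)]
    field_simp
  rw [key]
  exact (Rmat_isUnit M₁ N₁ ω hω0 Hhat hU).mul (Smat_isUnit M₁ N₁ hN h2 c hcdet)
end

section
/- The block matrix R with (m, k) block ω^{−k m} G^m (for 0 ≤ m ≤ M₁−1 block rows of size N₁, 0 ≤ k ≤ M₁−1 block columns of size N₁), where G = diag(1, ω, …, ω^{N₁−1}) and ω = exp(−2πi/N₁), is invertible. Indeed, up to row and column permutations R is block diagonal with the i-th diagonal block equal to the Vandermonde matrix V_{M₁}(ω^{i}, ω^{i−1}, …, ω^{i−M₁+1}), which is invertible since ω^{i}, ω^{i−1}, …, ω^{i−M₁+1} are pairwise distinct when M₁ ≤ N₁. -/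
open Matrix

theorem stmt_8 (M₁ N₁ : ℕ) (h1 : 1 ≤ M₁) (h2 : M₁ ≤ N₁) :
    let ω : ℂ := Complex.exp (-2 * Real.pi * Complex.I / N₁)
    let G : Matrix (Fin N₁) (Fin N₁) ℂ := Matrix.diagonal fun j => ω ^ (j : ℕ)
    -- `R` has `(m, k)` block `ω^(-k m) • G^m`
    let R : Matrix (Fin M₁ × Fin N₁) (Fin M₁ × Fin N₁) ℂ :=
      Matrix.of fun p q => (ω ^ ((q.1 : ℕ) * (p.1 : ℕ)))⁻¹ * (G ^ (p.1 : ℕ)) p.2 q.2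
    IsUnit R := by
  intro ω G R
  have hN : 0 < N₁ := lt_of_lt_of_le h1 h2
  have hωne : ω ≠ 0 := Complex.exp_ne_zero _
  have hω : IsPrimitiveRoot ω N₁ := by
    have hroot := Complex.isPrimitiveRoot_exp N₁ hN.ne'
    have heq : ω = (Complex.exp (2 * Real.pi * Complex.I / N₁))⁻¹ := by
      rw [← Complex.exp_neg]
      show Complex.exp _ = Complex.exp _
      ring_nf
    rw [heq]
    exact hroot.inv
  have hR : R = Matrix.blockDiagonal
      (fun j : Fin N₁ =>
        (Matrix.vandermonde (fun k : Fin M₁ => ω ^ (j : ℕ) * (ω ^ (k : ℕ))⁻¹))ᵀ) := by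
    ext ⟨m, j⟩ ⟨k, j'⟩
    simp only [R, G, Matrix.of_apply, Matrix.blockDiagonal_apply, Matrix.transpose_apply,
      Matrix.vandermonde, Matrix.diagonal_pow, Matrix.diagonal_apply, Matrix.of_apply]
    by_cases h : j = j'
    · simp only [h, if_pos rfl, if_true, Pi.pow_apply]
      rw [mul_pow, inv_pow, ← pow_mul, ← pow_mul]
      ring
    · simp [h]
  rw [hR]
  rw [Matrix.isUnit_iff_isUnit_det, Matrix.det_blockDiagonal]
  rw [isUnit_iff_ne_zero, Finset.prod_ne_zero_iff]
  intro j _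
  rw [Matrix.det_transpose, Matrix.det_vandermonde_ne_zero_iff]
  intro k₁ k₂ hkk
  have : (ω ^ (k₁ : ℕ))⁻¹ = (ω ^ (k₂ : ℕ))⁻¹ :=
    mul_left_cancel₀ (pow_ne_zero _ hωne) hkk
  have hpow : ω ^ (k₁ : ℕ) = ω ^ (k₂ : ℕ) := by
    exact inv_injective this
  exact Fin.ext (hω.pow_inj (lt_of_lt_of_le k₁.2 h2) (lt_of_lt_of_le k₂.2 h2) hpow)
end

section
/- Zero-forcing achievability counting for ZIC with CSIT: let M₁, N₁, M₂, N₂ be positive integers. Define f(d₁,d₂) achievable if either (M₂ ≥ N₁ and d₁ ≤ min(M₁,N₁) and d₂ ≤ min(M₂−N₁+(N₁−d₁), N₂) for integer stream counts) or (M₂ < N₁ and d₂ ≤ min(M₂,N₂) and d₁ ≤ min(N₁−d₂, M₁)). Then the closure (allowing time sharing, i.e. the convex hull with ℝ₊² downward closure) of the achievable integer pairs equals the polytope {(d₁,d₂) ∈ ℝ₊²: d₁ ≤ min(M₁,N₁), d₂ ≤ min(M₂,N₂), d₁+d₂ ≤ min(max(N₁,M₂), N₁+N₂, M₁+M₂)}.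 -/
/-- Zero-forcing achievable integer stream-count pairs for the two-user MIMO Z
interference channel with CSIT. -/
def zfAch (M₁ N₁ M₂ N₂ d₁ d₂ : ℕ) : Prop :=
  (N₁ ≤ M₂ ∧ d₁ ≤ min M₁ N₁ ∧ d₂ ≤ min (M₂ - N₁ + (N₁ - d₁)) N₂) ∨
  (M₂ < N₁ ∧ d₂ ≤ min M₂ N₂ ∧ d₁ ≤ min (N₁ - d₂) M₁)

lemma zf_ach1 (M₁ N₁ M₂ N₂ : ℕ) :
    zfAch M₁ N₁ M₂ N₂ (min M₁ N₁)
      (min (min M₂ N₂) (min (max N₁ M₂) (min (N₁+N₂) (M₁+M₂)) - min M₁ N₁)) := by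
  unfold zfAch; omega

lemma zf_ach2 (M₁ N₁ M₂ N₂ : ℕ) :
    zfAch M₁ N₁ M₂ N₂
      (min (min M₁ N₁) (min (max N₁ M₂) (min (N₁+N₂) (M₁+M₂)) - min M₂ N₂))
      (min M₂ N₂) := by
  unfold zfAch; omega

lemma zf_achDom (M₁ N₁ M₂ N₂ d₁ d₂ : ℕ) (h : zfAch M₁ N₁ M₂ N₂ d₁ d₂) :
    d₁ ≤ min M₁ N₁ ∧ d₂ ≤ min M₂ N₂ ∧
    d₁ + d₂ ≤ min (max N₁ M₂) (min (N₁+N₂) (M₁+M₂)) := by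
  unfold zfAch at h; omega

set_option maxHeartbeats 1000000 in
theorem stmt_19 (M₁ N₁ M₂ N₂ : ℕ) (h1 : 0 < M₁) (h2 : 0 < N₁) (h3 : 0 < M₂)
    (h4 : 0 < N₂) :
    convexHull ℝ {x : ℝ × ℝ | 0 ≤ x.1 ∧ 0 ≤ x.2 ∧
        ∃ d₁ d₂ : ℕ, zfAch M₁ N₁ M₂ N₂ d₁ d₂ ∧ x.1 ≤ (d₁ : ℝ) ∧ x.2 ≤ (d₂ : ℝ)} =
      {d : ℝ × ℝ | 0 ≤ d.1 ∧ 0 ≤ d.2 ∧ d.1 ≤ min (M₁ : ℝ) N₁ ∧ d.2 ≤ min (M₂ : ℝ) N₂ ∧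
        d.1 + d.2 ≤ min (max (N₁ : ℝ) M₂) (min ((N₁ : ℝ) + N₂) ((M₁ : ℝ) + M₂))} := by
  apply Set.Subset.antisymm
  · apply convexHull_min
    · rintro x ⟨hx1, hx2, d₁, d₂, hach, hle1, hle2⟩
      obtain ⟨hdA, hdB, hdC⟩ := zf_achDom M₁ N₁ M₂ N₂ d₁ d₂ hach
      have cA : (d₁ : ℝ) ≤ min (M₁ : ℝ) N₁ := by
        have := (Nat.cast_le (α := ℝ)).2 hdA; push_cast at this; exact this
      have cB : (d₂ : ℝ) ≤ min (M₂ : ℝ) N₂ := by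
        have := (Nat.cast_le (α := ℝ)).2 hdB; push_cast at this; exact this
      have cC : (d₁ : ℝ) + d₂ ≤
          min (max (N₁ : ℝ) M₂) (min ((N₁ : ℝ) + N₂) ((M₁ : ℝ) + M₂)) := by
        have := (Nat.cast_le (α := ℝ)).2 hdC; push_cast at this; linarith
      exact ⟨hx1, hx2, hle1.trans cA, hle2.trans cB, by linarith⟩
    · rintro p ⟨p1, p2, p3, p4, p5⟩ q ⟨q1, q2, q3, q4, q5⟩ s t hs ht hst
      simp only [Set.mem_setOf_eq, Prod.fst_add, Prod.snd_add, Prod.smul_fst,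
        Prod.smul_snd, smul_eq_mul]
      refine ⟨?_, ?_, ?_, ?_, ?_⟩
      · nlinarith [mul_nonneg hs p1, mul_nonneg ht q1]
      · nlinarith [mul_nonneg hs p2, mul_nonneg ht q2]
      · nlinarith [mul_le_mul_of_nonneg_left p3 hs, mul_le_mul_of_nonneg_left q3 ht]
      · nlinarith [mul_le_mul_of_nonneg_left p4 hs, mul_le_mul_of_nonneg_left q4 ht]
      · nlinarith [mul_le_mul_of_nonneg_left p5 hs, mul_le_mul_of_nonneg_left q5 ht]
  · intro w hw
    obtain ⟨hw1, hw2, hwA, hwB, hwC⟩ := hw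
    have hAC : (min M₁ N₁) ≤ min (max N₁ M₂) (min (N₁+N₂) (M₁+M₂)) := by omega
    have hBC : (min M₂ N₂) ≤ min (max N₁ M₂) (min (N₁+N₂) (M₁+M₂)) := by omega
    set A : ℝ := min (M₁ : ℝ) N₁ with hA
    set B : ℝ := min (M₂ : ℝ) N₂ with hB
    set C : ℝ := min (max (N₁ : ℝ) M₂) (min ((N₁ : ℝ) + N₂) ((M₁ : ℝ) + M₂)) with hC
    have hAcast : ((min M₁ N₁ : ℕ) : ℝ) = A := by rw [hA]; push_cast; rfl
    have hBcast : ((min M₂ N₂ : ℕ) : ℝ) = B := by rw [hB]; push_cast; rfl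
    have hCcast : ((min (max N₁ M₂) (min (N₁+N₂) (M₁+M₂)) : ℕ) : ℝ) = C := by
      rw [hC]; push_cast; rfl
    have hA0 : (0:ℝ) ≤ A := le_min (Nat.cast_nonneg _) (Nat.cast_nonneg _)
    have hB0 : (0:ℝ) ≤ B := le_min (Nat.cast_nonneg _) (Nat.cast_nonneg _)
    have hACr : A ≤ C := by
      rw [← hAcast, ← hCcast]; exact_mod_cast hAC
    have hBCr : B ≤ C := by
      rw [← hBcast, ← hCcast]; exact_mod_cast hBC
    set a : ℝ := min A (C - B) with ha'
    set b : ℝ := min B (C - A) with hb'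
    have hacast : ((min (min M₁ N₁) (min (max N₁ M₂) (min (N₁+N₂) (M₁+M₂)) - min M₂ N₂) : ℕ) : ℝ) = a := by
      rw [Nat.cast_min, Nat.cast_sub hBC, hAcast, hBcast, hCcast, ha']
    have hbcast : ((min (min M₂ N₂) (min (max N₁ M₂) (min (N₁+N₂) (M₁+M₂)) - min M₁ N₁) : ℕ) : ℝ) = b := by
      rw [Nat.cast_min, Nat.cast_sub hAC, hAcast, hBcast, hCcast, hb']
    have haA : a ≤ A := min_le_left _ _
    have hbB : b ≤ B := min_le_left _ _
    have ha0 : (0:ℝ) ≤ a := le_min hA0 (by linarith)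
    have hb0 : (0:ℝ) ≤ b := le_min hB0 (by linarith)
    set α : ℝ := if A ≤ a then 0 else max 0 ((w.1 - a) / (A - a)) with hα
    have hα0 : 0 ≤ α := by
      rw [hα]; split_ifs
      · exact le_refl 0
      · exact le_max_left 0 _
    have hα1 : α ≤ 1 := by
      rw [hα]; split_ifs with h
      · norm_num
      · push_neg at h
        apply max_le (by norm_num)
        rw [div_le_one (by linarith)]
        linarith
    have hz1 : w.1 ≤ α * A + (1 - α) * a := by
      rw [hα]; split_ifs with h
      · norm_num; linarith
      · push_neg at h
        have hne : A - a ≠ 0 := sub_ne_zero.mpr h.ne'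
        have hkey : w.1 - a ≤ (max 0 ((w.1 - a) / (A - a))) * (A - a) := by
          calc w.1 - a = ((w.1 - a) / (A - a)) * (A - a) := (div_mul_cancel₀ _ hne).symm
            _ ≤ _ := mul_le_mul_of_nonneg_right (le_max_right _ _) (by linarith)
        nlinarith [hkey]
    have hz2 : w.2 ≤ α * b + (1 - α) * B := by
      rw [hα]; split_ifs with h
      · norm_num; linarith
      · push_neg at h
        have haeq : a = C - B := by
          rcases le_total A (C - B) with h' | h'
          · exfalso; rw [ha'] at h; rw [min_eq_left h'] at h; exact lt_irrefl _ h
          · rw [ha', min_eq_right h']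
        have hbeq : b = C - A := by
          rw [hb']; apply min_eq_right
          have : C - B < A := by rw [haeq] at h; exact h
          linarith
        rcases le_or_gt (w.1 - a) 0 with hx | hx
        · have hmax : max 0 ((w.1 - a) / (A - a)) = 0 :=
            max_eq_left (div_nonpos_iff.mpr (Or.inr ⟨hx, by linarith⟩))
          rw [hmax]; norm_num; linarith
        · have hmax : max 0 ((w.1 - a) / (A - a)) = (w.1 - a) / (A - a) :=
            max_eq_right (le_of_lt (div_pos hx (by linarith)))
          rw [hmax, haeq, hbeq]
          have hne' : A - (C - B) ≠ 0 := by rw [← haeq]; exact sub_ne_zero.mpr h.ne'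
          have ht' : ((w.1 - (C - B)) / (A - (C - B))) * (A - (C - B)) = w.1 - (C - B) :=
            div_mul_cancel₀ _ hne'
          have key : ((w.1 - (C - B)) / (A - (C - B))) * (C - A)
              + (1 - (w.1 - (C - B)) / (A - (C - B))) * B = C - w.1 := by
            linear_combination -ht'
          linarith [key]
    set z₁ : ℝ := α * A + (1 - α) * a with hz₁def
    set z₂ : ℝ := α * b + (1 - α) * B with hz₂def
    have hz₁0 : 0 ≤ z₁ := by
      have h1' := mul_nonneg hα0 hA0
      have h2' := mul_nonneg (by linarith : (0:ℝ) ≤ 1 - α) ha0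
      rw [hz₁def]; linarith
    have hz₂0 : 0 ≤ z₂ := by
      have h1' := mul_nonneg hα0 hb0
      have h2' := mul_nonneg (by linarith : (0:ℝ) ≤ 1 - α) hB0
      rw [hz₂def]; linarith
    set l₁ : ℝ := if z₁ = 0 then 0 else w.1 / z₁ with hl₁
    set l₂ : ℝ := if z₂ = 0 then 0 else w.2 / z₂ with hl₂
    have hl₁0 : 0 ≤ l₁ := by
      rw [hl₁]; split_ifs with h
      · exact le_refl 0
      · exact div_nonneg hw1 hz₁0
    have hl₂0 : 0 ≤ l₂ := by
      rw [hl₂]; split_ifs with h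
      · exact le_refl 0
      · exact div_nonneg hw2 hz₂0
    have hl₁1 : l₁ ≤ 1 := by
      rw [hl₁]; split_ifs with h
      · norm_num
      · rw [div_le_one (lt_of_le_of_ne hz₁0 (Ne.symm h))]; exact hz1
    have hl₂1 : l₂ ≤ 1 := by
      rw [hl₂]; split_ifs with h
      · norm_num
      · rw [div_le_one (lt_of_le_of_ne hz₂0 (Ne.symm h))]; exact hz2
    have hl₁z : l₁ * z₁ = w.1 := by
      rw [hl₁]; split_ifs with h
      · rw [h] at hz1; simp; linarith
      · exact div_mul_cancel₀ _ h
    have hl₂z : l₂ * z₂ = w.2 := by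
      rw [hl₂]; split_ifs with h
      · rw [h] at hz2; simp; linarith
      · exact div_mul_cancel₀ _ h
    clear_value A B C a b α z₁ z₂ l₁ l₂
    have hu : ((l₁ * A, l₂ * b) : ℝ × ℝ) ∈ {x : ℝ × ℝ | 0 ≤ x.1 ∧ 0 ≤ x.2 ∧
        ∃ d₁ d₂ : ℕ, zfAch M₁ N₁ M₂ N₂ d₁ d₂ ∧ x.1 ≤ (d₁ : ℝ) ∧ x.2 ≤ (d₂ : ℝ)} := by
      refine ⟨mul_nonneg hl₁0 hA0, mul_nonneg hl₂0 hb0,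
        min M₁ N₁, min (min M₂ N₂) (min (max N₁ M₂) (min (N₁+N₂) (M₁+M₂)) - min M₁ N₁),
        zf_ach1 M₁ N₁ M₂ N₂, ?_, ?_⟩
      · rw [hAcast]; show l₁ * A ≤ A
        nlinarith [mul_le_mul_of_nonneg_right hl₁1 hA0]
      · rw [hbcast]; show l₂ * b ≤ b
        nlinarith [mul_le_mul_of_nonneg_right hl₂1 hb0]
    have hv : ((l₁ * a, l₂ * B) : ℝ × ℝ) ∈ {x : ℝ × ℝ | 0 ≤ x.1 ∧ 0 ≤ x.2 ∧
        ∃ d₁ d₂ : ℕ, zfAch M₁ N₁ M₂ N₂ d₁ d₂ ∧ x.1 ≤ (d₁ : ℝ) ∧ x.2 ≤ (d₂ : ℝ)} := by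
      refine ⟨mul_nonneg hl₁0 ha0, mul_nonneg hl₂0 hB0,
        min (min M₁ N₁) (min (max N₁ M₂) (min (N₁+N₂) (M₁+M₂)) - min M₂ N₂), min M₂ N₂,
        zf_ach2 M₁ N₁ M₂ N₂, ?_, ?_⟩
      · rw [hacast]; show l₁ * a ≤ a
        nlinarith [mul_le_mul_of_nonneg_right hl₁1 ha0]
      · rw [hBcast]; show l₂ * B ≤ B
        nlinarith [mul_le_mul_of_nonneg_right hl₂1 hB0]
    have hfinal := (convex_convexHull ℝ _) (subset_convexHull ℝ _ hu)
      (subset_convexHull ℝ _ hv) hα0 (by linarith : (0:ℝ) ≤ 1 - α) (by ring)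
    have heq : α • ((l₁ * A, l₂ * b) : ℝ × ℝ) + (1 - α) • ((l₁ * a, l₂ * B) : ℝ × ℝ) = w := by
      have e1 : α * (l₁ * A) + (1 - α) * (l₁ * a) = w.1 := by
        rw [← hl₁z, hz₁def]; ring
      have e2 : α * (l₂ * b) + (1 - α) * (l₂ * B) = w.2 := by
        rw [← hl₂z, hz₂def]; ring
      have : α • ((l₁ * A, l₂ * b) : ℝ × ℝ) + (1 - α) • ((l₁ * a, l₂ * B) : ℝ × ℝ)
          = (α * (l₁ * A) + (1 - α) * (l₁ * a), α * (l₂ * b) + (1 - α) * (l₂ * B)) := by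
        simp [Prod.smul_mk, Prod.mk_add_mk, smul_eq_mul]
      rw [this, e1, e2]
    rw [← heq]
    exact hfinal
end
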